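/- Let n ≥ 1, N = 2^n, 0 ≤ ε ≤ 1, and let E be an N×N unitary matrix over ℂ with |Tr(E)| ≥ N(1 − ε²). Let C₀ = ∑_{P ∈ 𝒫_n} r_P·P be an N×N matrix whose Pauli coefficients r_P satisfy: the support {P : r_P ≠ 0} has exactly M elements and |r_P| = 1/sqrt(M) for every P in the support. Then for every P₁ ∈ 𝒫_n with r_{P₁} ≠ 0 and every P₀ ∈ 𝒫_n with r_{P₀} = 0: |Tr(E·C₀·P₁)|/N − |Tr(E·C₀·P₀)|/N ≥ (1 − ε²)/sqrt(M) − 2·sqrt(M)·sqrt(2ε² − ε⁴). -/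

import Mathlib

open Matrix

/-- The four single-qubit Pauli matrices: I, X, Y, Z. -/
noncomputable def pauliOne : Fin 4 → Matrix (Fin 2) (Fin 2) ℂ
  | 0 => 1
  | 1 => !![0, 1; 1, 0]
  | 2 => !![0, -Complex.I; Complex.I, 0]
  | 3 => !![1, 0; 0, -1]

/-- The `n`-qubit Pauli matrix indexed by `s : Fin n → Fin 4`: the `n`-fold
Kronecker (tensor) product of single-qubit Paulis, realized as a matrix on
the index type `Fin n → Fin 2` (of cardinality `2 ^ n`). -/
noncomputable def PauliTensor (n : ℕ) (s : Fin n → Fin 4) :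
    Matrix (Fin n → Fin 2) (Fin n → Fin 2) ℂ :=
  Matrix.of fun x y => ∏ i, pauliOne (s i) (x i) (y i)

def pmul : Fin 4 → Fin 4 → Fin 4 := ![![0,1,2,3],![1,0,3,2],![2,3,0,1],![3,2,1,0]]

noncomputable def pphase : Fin 4 → Fin 4 → ℂ :=
  ![![1,1,1,1],![1,1,Complex.I,-Complex.I],![1,-Complex.I,1,Complex.I],![1,Complex.I,-Complex.I,1]]

lemma pmul_self (a : Fin 4) : pmul a a = 0 := by fin_cases a <;> rfl

lemma pmul_eq_zero_iff {a b : Fin 4} : pmul a b = 0 ↔ a = b := by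
  fin_cases a <;> fin_cases b <;> decide

lemma pphase_self (a : Fin 4) : pphase a a = 1 := by fin_cases a <;> rfl

lemma pphase_abs (a b : Fin 4) : ‖pphase a b‖ = 1 := by
  fin_cases a <;> fin_cases b <;> norm_num [pphase, Matrix.vecHead, Matrix.vecTail, Function.comp]

lemma pauli_mul (a b : Fin 4) :
    pauliOne a * pauliOne b = pphase a b • pauliOne (pmul a b) := by
  fin_cases a <;> fin_cases b <;>
    · ext i j
      fin_cases i <;> fin_cases j <;>
        norm_num [pauliOne, pmul, pphase, Matrix.mul_apply, Fin.sum_univ_two, Matrix.one_apply,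
          Complex.ext_iff, Matrix.vecHead, Matrix.vecTail, Function.comp]

lemma pauliOne_trace (a : Fin 4) : (pauliOne a).trace = if a = 0 then 2 else 0 := by
  fin_cases a <;> simp [pauliOne, Matrix.trace, Matrix.diag, Fin.sum_univ_two]

lemma pauliOne_conj (a : Fin 4) (x y : Fin 2) :
    (starRingEnd ℂ) (pauliOne a x y) = pauliOne a y x := by
  fin_cases a <;> fin_cases x <;> fin_cases y <;>
    simp [pauliOne, Matrix.one_apply]

lemma pauliOne_complete (x y z w : Fin 2) :
    ∑ a : Fin 4, pauliOne a x y * pauliOne a z w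
      = if x = w ∧ y = z then 2 else 0 := by
  fin_cases x <;> fin_cases y <;> fin_cases z <;> fin_cases w <;>
    norm_num [pauliOne, Fin.sum_univ_four, Matrix.one_apply, Complex.ext_iff]

variable {n : ℕ}

lemma PauliTensor_trace (s : Fin n → Fin 4) :
    (PauliTensor n s).trace = if s = (fun _ => 0) then (2:ℂ)^n else 0 := by
  have : (PauliTensor n s).trace = ∏ i, (pauliOne (s i)).trace := by
    simp only [Matrix.trace, Matrix.diag, PauliTensor, Matrix.of_apply]
    exact (Fintype.prod_sum fun i c => pauliOne (s i) c c).symm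
  rw [this]
  simp_rw [pauliOne_trace]
  have h2 : ∀ i : Fin n, (if s i = 0 then (2:ℂ) else 0)
      = 2 * (if s i = 0 then (1:ℂ) else 0) := by intro i; split <;> simp
  simp_rw [h2]
  rw [Finset.prod_mul_distrib, Finset.prod_const, Finset.prod_boole]
  simp [funext_iff]

lemma PauliTensor_mul (s t : Fin n → Fin 4) :
    PauliTensor n s * PauliTensor n t
      = (∏ i, pphase (s i) (t i)) • PauliTensor n (fun i => pmul (s i) (t i)) := by
  ext x y
  simp only [Matrix.mul_apply, PauliTensor, Matrix.of_apply, Matrix.smul_apply, smul_eq_mul]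
  calc ∑ z : Fin n → Fin 2, (∏ i, pauliOne (s i) (x i) (z i)) * ∏ i, pauliOne (t i) (z i) (y i)
      = ∑ z : Fin n → Fin 2, ∏ i, (pauliOne (s i) (x i) (z i) * pauliOne (t i) (z i) (y i)) := by
        simp_rw [Finset.prod_mul_distrib]
    _ = ∏ i, ∑ c : Fin 2, pauliOne (s i) (x i) c * pauliOne (t i) c (y i) :=
        (Fintype.prod_sum fun i c => pauliOne (s i) (x i) c * pauliOne (t i) c (y i)).symm
    _ = ∏ i, (pphase (s i) (t i) * pauliOne (pmul (s i) (t i)) (x i) (y i)) := by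
        refine Finset.prod_congr rfl fun i _ => ?_
        simpa [Matrix.mul_apply, Matrix.smul_apply] using
          congrFun (congrFun (pauli_mul (s i) (t i) : _) (x i)) (y i)
    _ = (∏ i, pphase (s i) (t i)) * ∏ i, pauliOne (pmul (s i) (t i)) (x i) (y i) :=
        Finset.prod_mul_distrib

lemma PauliTensor_complete (x y z w : Fin n → Fin 2) :
    ∑ s : Fin n → Fin 4, PauliTensor n s x y * PauliTensor n s z w
      = if x = w ∧ y = z then (2:ℂ)^n else 0 := by
  simp only [PauliTensor, Matrix.of_apply, ← Finset.prod_mul_distrib]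
  rw [← Fintype.prod_sum (f := fun i a => pauliOne a (x i) (y i) * pauliOne a (z i) (w i))]
  simp_rw [pauliOne_complete]
  have h2 : ∀ i : Fin n, (if x i = w i ∧ y i = z i then (2:ℂ) else 0)
      = 2 * (if x i = w i ∧ y i = z i then (1:ℂ) else 0) := by intro i; split <;> simp
  simp_rw [h2]
  rw [Finset.prod_mul_distrib, Finset.prod_const, Finset.prod_boole]
  simp [funext_iff, forall_and]

lemma PauliTensor_conjTranspose (s : Fin n → Fin 4) :
    (PauliTensor n s)ᴴ = PauliTensor n s := by
  ext x y
  simp [PauliTensor, Matrix.conjTranspose_apply, map_prod, pauliOne_conj]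

set_option maxHeartbeats 1000000 in
lemma pauli_parseval (A B : Matrix (Fin n → Fin 2) (Fin n → Fin 2) ℂ) :
    ∑ s : Fin n → Fin 4, (A * PauliTensor n s).trace * (B * PauliTensor n s).trace
      = (2:ℂ)^n * (A * B).trace := by
  have htr : ∀ (C : Matrix (Fin n → Fin 2) (Fin n → Fin 2) ℂ) (s : Fin n → Fin 4),
      (C * PauliTensor n s).trace
        = ∑ p : (Fin n → Fin 2) × (Fin n → Fin 2), C p.1 p.2 * PauliTensor n s p.2 p.1 := by
    intro C s
    rw [Fintype.sum_prod_type]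
    simp [Matrix.trace, Matrix.diag, Matrix.mul_apply]
  simp_rw [htr, Finset.sum_mul_sum]
  rw [Finset.sum_comm]
  have key : ∀ p q : (Fin n → Fin 2) × (Fin n → Fin 2),
      ∑ s : Fin n → Fin 4,
        (A p.1 p.2 * PauliTensor n s p.2 p.1) * (B q.1 q.2 * PauliTensor n s q.2 q.1)
      = A p.1 p.2 * B q.1 q.2 * (if (p.2, p.1) = q then (2:ℂ)^n else 0) := by
    intro p q
    simp_rw [mul_mul_mul_comm, ← Finset.mul_sum]
    rw [PauliTensor_complete]
    congr 1
    refine if_congr ?_ rfl rfl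
    constructor
    · rintro ⟨h1, h2⟩; exact Prod.ext h1 h2
    · rintro rfl; exact ⟨rfl, rfl⟩
  have step1 : ∀ p : (Fin n → Fin 2) × (Fin n → Fin 2),
      (∑ s : Fin n → Fin 4, ∑ q : (Fin n → Fin 2) × (Fin n → Fin 2), (A p.1 p.2 * PauliTensor n s p.2 p.1) * (B q.1 q.2 * PauliTensor n s q.2 q.1))
      = A p.1 p.2 * B p.2 p.1 * (2:ℂ)^n := by
    intro p
    rw [Finset.sum_comm]
    rw [Finset.sum_congr rfl fun q _ => key p q]
    rw [Finset.sum_eq_single ((p.2, p.1))]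
    · simp
    · intro q _ hq
      rw [if_neg (fun h => hq h.symm), mul_zero]
    · intro h; exact absurd (Finset.mem_univ _) h
  rw [Finset.sum_congr rfl fun p _ => step1 p]
  rw [Fintype.sum_prod_type]
  simp only [Matrix.trace, Matrix.diag, Matrix.mul_apply, Finset.mul_sum]
  exact Finset.sum_congr rfl fun x _ => Finset.sum_congr rfl fun y _ => by ring

lemma PauliTensor_zero : PauliTensor n (fun _ => 0) = 1 := by
  ext x y
  simp only [PauliTensor, Matrix.of_apply, pauliOne, Matrix.one_apply]
  rw [Finset.prod_boole]
  simp [funext_iff]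


/-- Theorem: lower bound on the gap `|Tr (E * C₀ * P₁)| / N - |Tr (E * C₀ * P₀)| / N`
between an on-support Pauli `P₁` and an off-support Pauli `P₀`, when `E` is a unitary with `|Tr E| ≥ N (1 - ε²)` and
all nonzero Pauli coefficients of `C₀` have modulus `1 / √M`, `M` being the
size of the support. -/
theorem trace_gap_bound (n : ℕ) (hn : 1 ≤ n)
    (ε : ℝ) (hε0 : 0 ≤ ε) (hε1 : ε ≤ 1)
    (E : Matrix (Fin n → Fin 2) (Fin n → Fin 2) ℂ)
    (hE : E ∈ Matrix.unitaryGroup (Fin n → Fin 2) ℂ)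
    (hEtr : (2 : ℝ) ^ n * (1 - ε ^ 2) ≤ ‖E.trace‖)
    (r : (Fin n → Fin 4) → ℂ) (C₀ : Matrix (Fin n → Fin 2) (Fin n → Fin 2) ℂ)
    (hC₀ : C₀ = ∑ s : Fin n → Fin 4, r s • PauliTensor n s)
    (M : ℕ) (hM : (Finset.univ.filter (fun s => r s ≠ 0)).card = M)
    (hr : ∀ s : Fin n → Fin 4, r s ≠ 0 → ‖r s‖ = 1 / Real.sqrt M)
    (s₁ : Fin n → Fin 4) (hs₁ : r s₁ ≠ 0)
    (s₀ : Fin n → Fin 4) (hs₀ : r s₀ = 0) :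
    (1 - ε ^ 2) / Real.sqrt M - 2 * Real.sqrt M * Real.sqrt (2 * ε ^ 2 - ε ^ 4)
        ≤ ‖(E * C₀ * PauliTensor n s₁).trace‖ / (2 : ℝ) ^ n
          - ‖(E * C₀ * PauliTensor n s₀).trace‖ / (2 : ℝ) ^ n := by
  classical
  set N : ℝ := (2:ℝ)^n with hNdef
  have hN : (0:ℝ) < N := by positivity
  set δ : ℝ := Real.sqrt (2 * ε ^ 2 - ε ^ 4) with hδdef
  have hδ0 : 0 ≤ δ := Real.sqrt_nonneg _
  have hε2 : 0 ≤ 1 - ε ^ 2 := by nlinarith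
  set S : Finset (Fin n → Fin 4) := Finset.univ.filter (fun s => r s ≠ 0) with hSdef
  have hs₁S : s₁ ∈ S := Finset.mem_filter.mpr ⟨Finset.mem_univ _, hs₁⟩
  have hM1 : 1 ≤ M := by
    rw [← hM]
    exact Finset.card_pos.mpr ⟨s₁, hs₁S⟩
  have hMR : (1:ℝ) ≤ (M:ℝ) := by exact_mod_cast hM1
  set sM : ℝ := Real.sqrt M with hsMdef
  have hsM : 0 < sM := Real.sqrt_pos.mpr (by linarith)
  have hsMsq : sM * sM = (M:ℝ) := Real.mul_self_sqrt (by linarith)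
  -- Parseval for E
  have hpars : ∑ t : Fin n → Fin 4, Complex.normSq ((E * PauliTensor n t).trace) = N ^ 2 := by
    have h := pauli_parseval (n := n) E Eᴴ
    have hconj : ∀ t, (Eᴴ * PauliTensor n t).trace = star ((E * PauliTensor n t).trace) := by
      intro t
      rw [← Matrix.trace_conjTranspose, Matrix.conjTranspose_mul, PauliTensor_conjTranspose,
        Matrix.trace_mul_comm]
    simp_rw [hconj] at h
    have hEE : E * Eᴴ = 1 := by
      have := (Matrix.mem_unitaryGroup_iff).mp hE
      simpa [Matrix.star_eq_conjTranspose] using this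
    rw [hEE, Matrix.trace_one] at h
    have hcard : (Fintype.card (Fin n → Fin 2) : ℂ) = (2:ℂ)^n := by
      simp [Fintype.card_fun]
    rw [hcard] at h
    simp_rw [Complex.star_def, Complex.mul_conj] at h
    have : ((∑ t : Fin n → Fin 4, Complex.normSq ((E * PauliTensor n t).trace) : ℝ) : ℂ)
        = ((N^2 : ℝ) : ℂ) := by
      push_cast
      rw [h, hNdef]
      push_cast
      ring
    exact_mod_cast this
  -- bound on off-identity coefficients
  have habound : ∀ t : Fin n → Fin 4, t ≠ (fun _ => 0) →
      ‖(E * PauliTensor n t).trace‖ ≤ N * δ := by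
    intro t ht
    have h0 : (N * (1 - ε ^ 2)) ^ 2 ≤ Complex.normSq ((E * PauliTensor n (fun _ => 0)).trace) := by
      rw [PauliTensor_zero, Matrix.mul_one, Complex.normSq_eq_norm_sq]
      have h1 : 0 ≤ N * (1 - ε ^ 2) := by positivity
      exact pow_le_pow_left₀ h1 hEtr 2
    have hsub : Complex.normSq ((E * PauliTensor n t).trace)
        + Complex.normSq ((E * PauliTensor n (fun _ => 0)).trace) ≤ N ^ 2 := by
      rw [← hpars]
      have hsubset : ({t, (fun _ => 0)} : Finset (Fin n → Fin 4)) ⊆ Finset.univ :=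
        Finset.subset_univ _
      have := Finset.sum_le_sum_of_subset_of_nonneg hsubset
        (fun x _ _ => Complex.normSq_nonneg ((E * PauliTensor n x).trace))
      rwa [Finset.sum_pair ht] at this
    have hsq : Complex.normSq ((E * PauliTensor n t).trace) ≤ (N * δ) ^ 2 := by
      have hδsq : δ ^ 2 = 2 * ε ^ 2 - ε ^ 4 := Real.sq_sqrt (by nlinarith)
      nlinarith [Complex.normSq_nonneg ((E * PauliTensor n (fun _ => 0)).trace)]
    have := Real.sqrt_le_sqrt hsq
    rw [Real.sqrt_sq (by positivity)] at this
    calc ‖(E * PauliTensor n t).trace‖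
        = Real.sqrt (Complex.normSq ((E * PauliTensor n t).trace)) := by
          rw [Complex.norm_def]
      _ ≤ N * δ := this
  -- expansion of traces
  have expand : ∀ u : Fin n → Fin 4, (E * C₀ * PauliTensor n u).trace
      = ∑ s ∈ S, ((r s * ∏ i, pphase (s i) (u i))
          * (E * PauliTensor n (fun i => pmul (s i) (u i))).trace) := by
    intro u
    have h1 : (E * C₀ * PauliTensor n u).trace
        = ∑ s : Fin n → Fin 4, ((r s * ∏ i, pphase (s i) (u i))
            * (E * PauliTensor n (fun i => pmul (s i) (u i))).trace) := by
      rw [hC₀, Matrix.mul_sum, Matrix.sum_mul, Matrix.trace_sum]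
      refine Finset.sum_congr rfl fun s _ => ?_
      rw [mul_smul_comm, smul_mul_assoc, Matrix.mul_assoc, PauliTensor_mul,
        mul_smul_comm, smul_smul, Matrix.trace_smul]
      simp [mul_assoc]
    rw [h1]
    exact (Finset.sum_subset (Finset.subset_univ S) (fun s _ hs => by
      have : r s = 0 := by simpa [hSdef] using hs
      simp [this])).symm
  -- modulus of each term
  have hterm : ∀ s ∈ S, ∀ u : Fin n → Fin 4,
      ‖(r s * ∏ i, pphase (s i) (u i))
          * (E * PauliTensor n (fun i => pmul (s i) (u i))).trace‖
        = (1 / sM) * ‖(E * PauliTensor n (fun i => pmul (s i) (u i))).trace‖ := by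
    intro s hs u
    have hrs : r s ≠ 0 := by simpa [hSdef] using hs
    rw [norm_mul, norm_mul, hr s hrs, Complex.norm_prod]
    simp [pphase_abs]
  have hne : ∀ s u : Fin n → Fin 4, s ≠ u → (fun i => pmul (s i) (u i)) ≠ (fun _ => 0) := by
    intro s u hsu h
    apply hsu
    funext i
    exact pmul_eq_zero_iff.mp (congrFun h i)
  -- off-support bound
  have hoff : ‖(E * C₀ * PauliTensor n s₀).trace‖ ≤ (M:ℝ) * ((1/sM) * (N * δ)) := by
    rw [expand s₀]
    refine le_trans (norm_sum_le _ _) ?_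
    have hb : ∀ s ∈ S, ‖(r s * ∏ i, pphase (s i) (s₀ i))
          * (E * PauliTensor n (fun i => pmul (s i) (s₀ i))).trace‖ ≤ (1/sM) * (N * δ) := by
      intro s hs
      rw [hterm s hs s₀]
      have hsne : s ≠ s₀ := fun h => (by simpa [hSdef, h, hs₀] using hs)
      have := habound _ (hne s s₀ hsne)
      have h1 : 0 < 1 / sM := by positivity
      exact mul_le_mul_of_nonneg_left this h1.le
    calc ∑ s ∈ S, ‖_‖ ≤ S.card • ((1/sM) * (N * δ)) :=
          Finset.sum_le_card_nsmul S _ _ hb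
      _ = (M:ℝ) * ((1/sM) * (N * δ)) := by rw [hM, nsmul_eq_mul]
  -- on-support bound
  have hon : (1/sM) * (N * (1 - ε^2)) - ((M:ℝ) - 1) * ((1/sM) * (N * δ))
      ≤ ‖(E * C₀ * PauliTensor n s₁).trace‖ := by
    rw [expand s₁, ← Finset.add_sum_erase S _ hs₁S]
    set x := (r s₁ * ∏ i, pphase (s₁ i) (s₁ i))
        * (E * PauliTensor n (fun i => pmul (s₁ i) (s₁ i))).trace with hx
    set y := ∑ s ∈ S.erase s₁, ((r s * ∏ i, pphase (s i) (s₁ i))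
        * (E * PauliTensor n (fun i => pmul (s i) (s₁ i))).trace) with hy
    have htri : ‖x‖ - ‖y‖ ≤ ‖x + y‖ := by
      simpa [sub_neg_eq_add] using norm_sub_norm_le x (-y)
    have hxval : (1/sM) * (N * (1 - ε^2)) ≤ ‖x‖ := by
      rw [hx]
      have h1 : (fun i => pmul (s₁ i) (s₁ i)) = (fun _ : Fin n => (0 : Fin 4)) := by
        funext i; exact pmul_self (s₁ i)
      rw [h1, PauliTensor_zero, Matrix.mul_one, norm_mul, norm_mul, Complex.norm_prod, hr s₁ hs₁]
      simp only [pphase_self, norm_one, Finset.prod_const_one, mul_one]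
      exact mul_le_mul_of_nonneg_left hEtr (by positivity : (0:ℝ) ≤ 1 / sM)
    have hyval : ‖y‖ ≤ ((M:ℝ) - 1) * ((1/sM) * (N * δ)) := by
      rw [hy]
      refine le_trans (norm_sum_le _ _) ?_
      have hb : ∀ s ∈ S.erase s₁, ‖(r s * ∏ i, pphase (s i) (s₁ i))
            * (E * PauliTensor n (fun i => pmul (s i) (s₁ i))).trace‖ ≤ (1/sM) * (N * δ) := by
        intro s hs
        have hsS : s ∈ S := Finset.mem_of_mem_erase hs
        have hsne : s ≠ s₁ := Finset.ne_of_mem_erase hs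
        rw [hterm s hsS s₁]
        exact mul_le_mul_of_nonneg_left (habound _ (hne s s₁ hsne)) (by positivity)
      calc ∑ s ∈ S.erase s₁, ‖_‖ ≤ (S.erase s₁).card • ((1/sM) * (N * δ)) :=
            Finset.sum_le_card_nsmul _ _ _ hb
        _ = ((M:ℝ) - 1) * ((1/sM) * (N * δ)) := by
            rw [Finset.card_erase_of_mem hs₁S, hM, nsmul_eq_mul, Nat.cast_sub hM1]
            norm_num
    linarith
  -- final arithmetic
  have hB1 : (1 - ε^2)/sM - 2*sM*δ
      ≤ ((1/sM) * (N * (1 - ε^2)) - ((M:ℝ) - 1) * ((1/sM) * (N * δ))) / N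
        - ((M:ℝ) * ((1/sM) * (N * δ))) / N := by
    have hNne : N ≠ 0 := hN.ne'
    have hsMne : sM ≠ 0 := hsM.ne'
    have heq : ((1/sM) * (N * (1 - ε^2)) - ((M:ℝ) - 1) * ((1/sM) * (N * δ))) / N
        - ((M:ℝ) * ((1/sM) * (N * δ))) / N
        = (1 - ε^2)/sM - (2*(M:ℝ) - 1) * δ / sM := by
      field_simp
      ring
    rw [heq]
    have : (2*(M:ℝ) - 1) * δ / sM ≤ 2*sM*δ := by
      rw [div_le_iff₀ hsM]
      nlinarith
    linarith
  refine le_trans hB1 ?_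
  gcongr
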